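/- Let Ω ⊆ ℝ³ be an open set and let a₁, a₂, a₃ : Ω → ℝ be continuously differentiable, with aₗ and all products a_i ∂_i a_ℓ (i,ℓ = 1,2,3) bounded on Ω. Then for every s₀ ∈ ℝ and σ ≥ 0 there exists a constant C ≥ 0 such that for all continuously differentiable u, v : Ω → ℍ with u, v and all their partial derivatives square-integrable on Ω, | b(u,v) | ≤ C · ‖u‖_{H¹} · ‖v‖_{H¹}, where b(u,v) := Σ_{ℓ=1}³ ∫_Ω star(aₗ∂ₗu)·aₗ∂ₗv + (1/2) Σ_{ℓ=1}³ ∫_Ω star(∂ₗu)·∂ₗ(aₗ²)·v + ∫_Ω star(Vu − 2s₀·Tu)·v + σ ∫_Ω star(u)·v and ‖u‖²_{H¹} := ‖u‖²_{L²(Ω)} + Σ_{ℓ=1}³ ‖∂ₗu‖²_{L²(Ω)}. -/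

import Mathlib

open MeasureTheory

noncomputable section

/-- `ℝ³`, modelled as `Fin 3 → ℝ`. -/
abbrev R3 := Fin 3 → ℝ

/-- Partial derivative in the `ℓ`-th coordinate direction of a quaternion-valued function. -/
def pdQ (ℓ : Fin 3) (u : R3 → Quaternion ℝ) (x : R3) : Quaternion ℝ :=
  fderiv ℝ u x (Pi.single ℓ 1)

/-- Partial derivative in the `ℓ`-th coordinate direction of a real-valued function. -/
def pdR (ℓ : Fin 3) (f : R3 → ℝ) (x : R3) : ℝ :=
  fderiv ℝ f x (Pi.single ℓ 1)

/-- The imaginary units `e₁, e₂, e₃` of the quaternions. -/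
def eQ : Fin 3 → Quaternion ℝ
  | 0 => ⟨0, 1, 0, 0⟩
  | 1 => ⟨0, 0, 1, 0⟩
  | 2 => ⟨0, 0, 0, 1⟩

/-- The vector operator `T u = Σₗ eₗ (aₗ ∂ₗ u)`. -/
def Tvec (a : Fin 3 → R3 → ℝ) (u : R3 → Quaternion ℝ) (x : R3) : Quaternion ℝ :=
  ∑ ℓ : Fin 3, eQ ℓ * (a ℓ x • pdQ ℓ u x)

/-- The first-order vector operator
`V u = e₁(a₃(∂₃a₂)∂₂u − a₂(∂₂a₃)∂₃u) + e₂(a₃(∂₃a₁)∂₁u − a₁(∂₁a₃)∂₃u)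
      + e₃(a₁(∂₁a₂)∂₂u − a₂(∂₂a₁)∂₁u)`
(indices shifted by one: `aᵢ = a (i-1)`, `eᵢ = eQ (i-1)`). -/
def Vop (a : Fin 3 → R3 → ℝ) (u : R3 → Quaternion ℝ) (x : R3) : Quaternion ℝ :=
  eQ 0 * ((a 2 x * pdR 2 (a 1) x) • pdQ 1 u x - (a 1 x * pdR 1 (a 2) x) • pdQ 2 u x)
  + eQ 1 * ((a 2 x * pdR 2 (a 0) x) • pdQ 0 u x - (a 0 x * pdR 0 (a 2) x) • pdQ 2 u x)
  + eQ 2 * ((a 0 x * pdR 0 (a 1) x) • pdQ 1 u x - (a 1 x * pdR 1 (a 0) x) • pdQ 0 u x)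

/-- The `L²(Ω)` norm `(∫_Ω |g|²)^{1/2}` of a quaternion-valued function. -/
def nL2 (Ω : Set R3) (g : R3 → Quaternion ℝ) : ℝ :=
  (∫ x in Ω, ‖g x‖ ^ 2) ^ ((1 : ℝ) / 2)

/-- `D₁(u) = Σₗ ‖∂ₗu‖_{L²(Ω)}`. -/
def D1 (Ω : Set R3) (u : R3 → Quaternion ℝ) : ℝ :=
  ∑ ℓ : Fin 3, nL2 Ω (pdQ ℓ u)

/-- The squared Dirichlet seminorm `‖u‖²_D = Σₗ ‖∂ₗu‖²_{L²(Ω)}`. -/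
def nD2 (Ω : Set R3) (u : R3 → Quaternion ℝ) : ℝ :=
  ∑ ℓ : Fin 3, ∫ x in Ω, ‖pdQ ℓ u x‖ ^ 2

/-- `M = Σ_{i,ℓ} ‖aᵢ ∂ᵢ aₗ‖_{L³(Ω)}`. -/
def Msum (Ω : Set R3) (a : Fin 3 → R3 → ℝ) : ℝ :=
  ∑ i : Fin 3, ∑ ℓ : Fin 3, (∫ x in Ω, |a i x * pdR i (a ℓ) x| ^ 3) ^ ((1 : ℝ) / 3)

/-- The real part `Re b_{js₁}(u,u)` of the quadratic form of Definition 3.2 of the paper,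
for a purely imaginary spectral parameter `s = j s₁`:
`ReB(u) = s₁²‖u‖²_{L²} + Σₗ‖aₗ∂ₗu‖²_{L²}
  + Re((1/2) Σₗ ∫_Ω star(∂ₗu) ∂ₗ(aₗ²) u + ∫_Ω star(Vu) u)`. -/
def ReB (Ω : Set R3) (a : Fin 3 → R3 → ℝ) (s₁ : ℝ) (u : R3 → Quaternion ℝ) : ℝ :=
  s₁ ^ 2 * (∫ x in Ω, ‖u x‖ ^ 2)
  + (∑ ℓ : Fin 3, ∫ x in Ω, ‖a ℓ x • pdQ ℓ u x‖ ^ 2)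
  + ((1 / 2 : ℝ) • (∑ ℓ : Fin 3,
        ∫ x in Ω, star (pdQ ℓ u x) * (pdR ℓ (fun y => a ℓ y ^ 2) x • u x))
      + ∫ x in Ω, star (Vop a u x) * u x).re


/-! ### Auxiliary lemmas -/

lemma normEQ (ℓ : Fin 3) : ‖eQ ℓ‖ = 1 := by
  fin_cases ℓ <;>
    rw [← Real.sqrt_sq (norm_nonneg (eQ _)), sq, ← Quaternion.normSq_eq_norm_mul_self,
      Quaternion.normSq_def'] <;>
    simp [eQ, norm_eq_sqrt_real_inner, Quaternion.inner_self, Quaternion.normSq_def']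

lemma pdR_sq {Ω : Set R3} (hΩo : IsOpen Ω) {f : R3 → ℝ} (ha : ContDiffOn ℝ 1 f Ω)
    {x : R3} (hx : x ∈ Ω) (ℓ : Fin 3) :
    pdR ℓ (fun y => f y ^ 2) x = 2 * (f x * pdR ℓ f x) := by
  have hd : DifferentiableAt ℝ f x :=
    (ha.differentiableOn one_ne_zero).differentiableAt (hΩo.mem_nhds hx)
  have h2 : HasFDerivAt (fun y => f y ^ 2) (f x • fderiv ℝ f x + f x • fderiv ℝ f x) x := by
    simp_rw [pow_two]
    exact hd.hasFDerivAt.mul hd.hasFDerivAt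
  simp only [pdR, h2.fderiv, ContinuousLinearMap.add_apply, ContinuousLinearMap.smul_apply,
    smul_eq_mul]
  ring

lemma integrable_norm_mul {α} [MeasurableSpace α] {μ : Measure α} {f g : α → Quaternion ℝ}
    (hf : MemLp f 2 μ) (hg : MemLp g 2 μ) :
    Integrable (fun x => ‖f x‖ * ‖g x‖) μ := by
  have h : MemLp ((fun x => ‖f x‖) • (fun x => ‖g x‖)) 1 μ :=
    (hg.norm).smul (hf.norm)
  rw [← memLp_one_iff_integrable]
  exact h

lemma myCS {α} [MeasurableSpace α] {μ : Measure α} {f g : α → Quaternion ℝ}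
    (hf : MemLp f 2 μ) (hg : MemLp g 2 μ) :
    ∫ x, ‖f x‖ * ‖g x‖ ∂μ ≤
      (∫ x, ‖f x‖ ^ 2 ∂μ) ^ ((1:ℝ)/2) * (∫ x, ‖g x‖ ^ 2 ∂μ) ^ ((1:ℝ)/2) := by
  have hpq : (2:ℝ).HolderConjugate 2 := Real.HolderConjugate.two_two
  have h2 : ENNReal.ofReal (2:ℝ) = 2 := by simp [ENNReal.ofReal_ofNat]
  have h := integral_mul_norm_le_Lp_mul_Lq (μ := μ) hpq (h2 ▸ hf) (h2 ▸ hg)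
  have e : ∀ x : ℝ, x ^ (2:ℝ) = x ^ (2:ℕ) := fun x => by
    rw [show (2:ℝ) = ((2:ℕ):ℝ) by norm_num, Real.rpow_natCast]
  simp_rw [e] at h
  exact h

lemma piece_le {Ω : Set R3} (hΩo : IsOpen Ω) {F f g : R3 → Quaternion ℝ} {c : ℝ} (hc : 0 ≤ c)
    (hf : MemLp f 2 (volume.restrict Ω)) (hg : MemLp g 2 (volume.restrict Ω))
    (hF : ∀ x ∈ Ω, ‖F x‖ ≤ c * (‖f x‖ * ‖g x‖)) :
    ‖∫ x in Ω, F x‖ ≤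
      c * ((∫ x in Ω, ‖f x‖ ^ 2) ^ ((1:ℝ)/2) * (∫ x in Ω, ‖g x‖ ^ 2) ^ ((1:ℝ)/2)) := by
  calc ‖∫ x in Ω, F x‖ ≤ ∫ x in Ω, ‖F x‖ := norm_integral_le_integral_norm F
    _ ≤ ∫ x in Ω, c * (‖f x‖ * ‖g x‖) := by
        refine integral_mono_of_nonneg (Filter.Eventually.of_forall fun x => norm_nonneg _)
          ((integrable_norm_mul hf hg).const_mul c) ?_
        filter_upwards [ae_restrict_mem hΩo.measurableSet] with x hx using hF x hx
    _ = c * ∫ x in Ω, ‖f x‖ * ‖g x‖ := integral_const_mul c _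
    _ ≤ _ := mul_le_mul_of_nonneg_left (myCS hf hg) hc

set_option maxHeartbeats 1000000 in
/-- continuity of the bilinear form `b_s`, inequality (bilcont) of
Proposition 4.1 of the paper, for the form without boundary term of Definition 3.3.
If the `aₗ` and all products `aᵢ∂ᵢaₗ` are bounded on `Ω`, then for every `s₀ ∈ ℝ` and
`σ ≥ 0` there is `C ≥ 0` with `|b(u,v)| ≤ C ‖u‖_{H¹} ‖v‖_{H¹}` for all admissible
`u, v`, where
`b(u,v) = Σₗ ∫ star(aₗ∂ₗu) aₗ∂ₗv + (1/2) Σₗ ∫ star(∂ₗu) ∂ₗ(aₗ²) v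
  + ∫ star(Vu − 2s₀Tu) v + σ ∫ star(u) v`. -/
theorem stmt14 (Ω : Set R3) (hΩo : IsOpen Ω)
    (a : Fin 3 → R3 → ℝ) (ha : ∀ ℓ, ContDiffOn ℝ 1 (a ℓ) Ω)
    (hab : ∀ ℓ : Fin 3, ∃ B : ℝ, ∀ x ∈ Ω, |a ℓ x| ≤ B)
    (hab2 : ∀ i ℓ : Fin 3, ∃ B : ℝ, ∀ x ∈ Ω, |a i x * pdR i (a ℓ) x| ≤ B)
    (s₀ σ : ℝ) (hσ : 0 ≤ σ) :
    ∃ C ≥ (0 : ℝ), ∀ u v : R3 → Quaternion ℝ,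
      ContDiffOn ℝ 1 u Ω → ContDiffOn ℝ 1 v Ω →
      MemLp u 2 (volume.restrict Ω) → MemLp v 2 (volume.restrict Ω) →
      (∀ ℓ : Fin 3, MemLp (pdQ ℓ u) 2 (volume.restrict Ω)) →
      (∀ ℓ : Fin 3, MemLp (pdQ ℓ v) 2 (volume.restrict Ω)) →
      ‖(∑ ℓ : Fin 3, ∫ x in Ω, star (a ℓ x • pdQ ℓ u x) * (a ℓ x • pdQ ℓ v x))
          + (1 / 2 : ℝ) • (∑ ℓ : Fin 3,
              ∫ x in Ω, star (pdQ ℓ u x) * (pdR ℓ (fun y => a ℓ y ^ 2) x • v x))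
          + (∫ x in Ω, star (Vop a u x - (2 * s₀) • Tvec a u x) * v x)
          + σ • ∫ x in Ω, star (u x) * v x‖ ≤
        C * ((∫ x in Ω, ‖u x‖ ^ 2) + nD2 Ω u) ^ ((1 : ℝ) / 2)
          * ((∫ x in Ω, ‖v x‖ ^ 2) + nD2 Ω v) ^ ((1 : ℝ) / 2) := by
  classical
  choose B0 hB0 using hab
  choose M0 hM0 using hab2
  set B : Fin 3 → ℝ := fun ℓ => max (B0 ℓ) 0 with hBdef
  set M : Fin 3 → Fin 3 → ℝ := fun i ℓ => max (M0 i ℓ) 0 with hMdef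
  have hBnn : ∀ ℓ, 0 ≤ B ℓ := fun ℓ => le_max_right _ _
  have hBb : ∀ ℓ, ∀ x ∈ Ω, |a ℓ x| ≤ B ℓ := fun ℓ x hx => (hB0 ℓ x hx).trans (le_max_left _ _)
  have hMnn : ∀ i ℓ, 0 ≤ M i ℓ := fun i ℓ => le_max_right _ _
  have hMb : ∀ i ℓ, ∀ x ∈ Ω, |a i x * pdR i (a ℓ) x| ≤ M i ℓ :=
    fun i ℓ x hx => (hM0 i ℓ x hx).trans (le_max_left _ _)
  set KB : ℝ := ∑ ℓ : Fin 3, B ℓ with hKBdef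
  set KM : ℝ := ∑ i : Fin 3, ∑ ℓ : Fin 3, M i ℓ with hKMdef
  have hKBnn : 0 ≤ KB := Finset.sum_nonneg fun ℓ _ => hBnn ℓ
  have hKMnn : 0 ≤ KM := Finset.sum_nonneg fun i _ => Finset.sum_nonneg fun ℓ _ => hMnn i ℓ
  have hBleKB : ∀ ℓ, B ℓ ≤ KB := fun ℓ =>
    Finset.single_le_sum (f := B) (fun i _ => hBnn i) (Finset.mem_univ ℓ)
  have hMleKM : ∀ i ℓ, M i ℓ ≤ KM := fun i ℓ =>
    le_trans (Finset.single_le_sum (f := M i) (fun j _ => hMnn i j) (Finset.mem_univ ℓ))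
      (Finset.single_le_sum (f := fun i => ∑ ℓ : Fin 3, M i ℓ)
        (fun j _ => Finset.sum_nonneg fun k _ => hMnn j k) (Finset.mem_univ i))
  set cC : ℝ := 2 * KM + 2 * |s₀| * KB with hcCdef
  have hcC : 0 ≤ cC := by
    have := abs_nonneg s₀
    nlinarith
  refine ⟨(∑ ℓ : Fin 3, B ℓ ^ 2) + (∑ ℓ : Fin 3, M ℓ ℓ) + 3 * cC + σ, ?_, ?_⟩
  · have h1 : 0 ≤ ∑ ℓ : Fin 3, B ℓ ^ 2 := Finset.sum_nonneg fun ℓ _ => sq_nonneg _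
    have h2 : 0 ≤ ∑ ℓ : Fin 3, M ℓ ℓ := Finset.sum_nonneg fun ℓ _ => hMnn ℓ ℓ
    linarith
  intro u v hu hv huL2 hvL2 huD hvD
  set Su : ℝ := ((∫ x in Ω, ‖u x‖ ^ 2) + nD2 Ω u) ^ ((1:ℝ)/2) with hSudef
  set Sv : ℝ := ((∫ x in Ω, ‖v x‖ ^ 2) + nD2 Ω v) ^ ((1:ℝ)/2) with hSvdef
  have h0u : 0 ≤ ∫ x in Ω, ‖u x‖ ^ 2 := integral_nonneg fun x => by positivity
  have h0v : 0 ≤ ∫ x in Ω, ‖v x‖ ^ 2 := integral_nonneg fun x => by positivity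
  have h0Du : 0 ≤ nD2 Ω u :=
    Finset.sum_nonneg fun ℓ _ => integral_nonneg fun x => by positivity
  have h0Dv : 0 ≤ nD2 Ω v :=
    Finset.sum_nonneg fun ℓ _ => integral_nonneg fun x => by positivity
  have hSu0 : 0 ≤ Su := Real.rpow_nonneg (by linarith) _
  have hSv0 : 0 ≤ Sv := Real.rpow_nonneg (by linarith) _
  have hUu : (∫ x in Ω, ‖u x‖ ^ 2) ^ ((1:ℝ)/2) ≤ Su :=
    Real.rpow_le_rpow h0u (le_add_of_nonneg_right h0Du) (by norm_num)
  have hUv : (∫ x in Ω, ‖v x‖ ^ 2) ^ ((1:ℝ)/2) ≤ Sv :=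
    Real.rpow_le_rpow h0v (le_add_of_nonneg_right h0Dv) (by norm_num)
  have hDu : ∀ ℓ, (∫ x in Ω, ‖pdQ ℓ u x‖ ^ 2) ^ ((1:ℝ)/2) ≤ Su := by
    intro ℓ
    refine Real.rpow_le_rpow (integral_nonneg fun x => by positivity) ?_ (by norm_num)
    have h : ∫ x in Ω, ‖pdQ ℓ u x‖ ^ 2 ≤ nD2 Ω u :=
      Finset.single_le_sum (f := fun ℓ => ∫ x in Ω, ‖pdQ ℓ u x‖ ^ 2)
        (fun j _ => integral_nonneg fun x => by positivity) (Finset.mem_univ ℓ)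
    linarith
  have hDv : ∀ ℓ, (∫ x in Ω, ‖pdQ ℓ v x‖ ^ 2) ^ ((1:ℝ)/2) ≤ Sv := by
    intro ℓ
    refine Real.rpow_le_rpow (integral_nonneg fun x => by positivity) ?_ (by norm_num)
    have h : ∫ x in Ω, ‖pdQ ℓ v x‖ ^ 2 ≤ nD2 Ω v :=
      Finset.single_le_sum (f := fun ℓ => ∫ x in Ω, ‖pdQ ℓ v x‖ ^ 2)
        (fun j _ => integral_nonneg fun x => by positivity) (Finset.mem_univ ℓ)
    linarith
  -- generic single-piece estimate
  have key : ∀ (c : ℝ), 0 ≤ c → ∀ (f g F : R3 → Quaternion ℝ),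
      MemLp f 2 (volume.restrict Ω) → MemLp g 2 (volume.restrict Ω) →
      (∫ x in Ω, ‖f x‖ ^ 2) ^ ((1:ℝ)/2) ≤ Su → (∫ x in Ω, ‖g x‖ ^ 2) ^ ((1:ℝ)/2) ≤ Sv →
      (∀ x ∈ Ω, ‖F x‖ ≤ c * (‖f x‖ * ‖g x‖)) →
      ‖∫ x in Ω, F x‖ ≤ c * (Su * Sv) := by
    intro c hc f g F hfm hgm hfS hgS hF
    refine (piece_le hΩo hc hfm hgm hF).trans ?_
    refine mul_le_mul_of_nonneg_left ?_ hc
    exact mul_le_mul hfS hgS (Real.rpow_nonneg (integral_nonneg fun x => by positivity) _) hSu0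
  -- Term A
  have hA : ‖∑ ℓ : Fin 3, ∫ x in Ω, star (a ℓ x • pdQ ℓ u x) * (a ℓ x • pdQ ℓ v x)‖ ≤
      (∑ ℓ : Fin 3, B ℓ ^ 2) * (Su * Sv) := by
    refine (norm_sum_le _ _).trans ?_
    rw [Finset.sum_mul]
    refine Finset.sum_le_sum fun ℓ _ => ?_
    refine key (B ℓ ^ 2) (by positivity) (pdQ ℓ u) (pdQ ℓ v) _ (huD ℓ) (hvD ℓ)
      (hDu ℓ) (hDv ℓ) ?_
    intro x hx
    rw [norm_mul, Quaternion.norm_star, norm_smul, norm_smul, Real.norm_eq_abs]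
    have h1 := hBb ℓ x hx
    have h2 : |a ℓ x| * |a ℓ x| ≤ B ℓ * B ℓ := mul_le_mul h1 h1 (abs_nonneg _) (hBnn ℓ)
    nlinarith [norm_nonneg (pdQ ℓ u x), norm_nonneg (pdQ ℓ v x),
      mul_nonneg (norm_nonneg (pdQ ℓ u x)) (norm_nonneg (pdQ ℓ v x)), abs_nonneg (a ℓ x)]
  -- Term B
  have hB2 : ‖(1 / 2 : ℝ) • (∑ ℓ : Fin 3,
        ∫ x in Ω, star (pdQ ℓ u x) * (pdR ℓ (fun y => a ℓ y ^ 2) x • v x))‖ ≤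
      (∑ ℓ : Fin 3, M ℓ ℓ) * (Su * Sv) := by
    rw [norm_smul, Real.norm_eq_abs]
    have hstep : ‖∑ ℓ : Fin 3,
        ∫ x in Ω, star (pdQ ℓ u x) * (pdR ℓ (fun y => a ℓ y ^ 2) x • v x)‖ ≤
        ∑ ℓ : Fin 3, 2 * M ℓ ℓ * (Su * Sv) := by
      refine (norm_sum_le _ _).trans (Finset.sum_le_sum fun ℓ _ => ?_)
      refine key (2 * M ℓ ℓ) (by have := hMnn ℓ ℓ; linarith) (pdQ ℓ u) v _ (huD ℓ) hvL2
        (hDu ℓ) hUv ?_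
      intro x hx
      rw [norm_mul, Quaternion.norm_star, norm_smul, Real.norm_eq_abs,
        pdR_sq hΩo (ha ℓ) hx ℓ, abs_mul]
      have h1 := hMb ℓ ℓ x hx
      have h2 : |(2:ℝ)| = 2 := by norm_num
      rw [h2]
      nlinarith [norm_nonneg (pdQ ℓ u x), norm_nonneg (v x), abs_nonneg (a ℓ x * pdR ℓ (a ℓ) x),
        mul_nonneg (norm_nonneg (pdQ ℓ u x)) (norm_nonneg (v x))]
    calc |(1/2 : ℝ)| * ‖∑ ℓ : Fin 3,
          ∫ x in Ω, star (pdQ ℓ u x) * (pdR ℓ (fun y => a ℓ y ^ 2) x • v x)‖ ≤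
        |(1/2 : ℝ)| * ∑ ℓ : Fin 3, 2 * M ℓ ℓ * (Su * Sv) :=
          mul_le_mul_of_nonneg_left hstep (abs_nonneg _)
      _ = (∑ ℓ : Fin 3, M ℓ ℓ) * (Su * Sv) := by
          rw [Finset.sum_mul, Fin.sum_univ_three, Fin.sum_univ_three]
          rw [show |(1/2 : ℝ)| = 1/2 by norm_num]
          ring
  -- Term C
  have hCterm : ‖∫ x in Ω, star (Vop a u x - (2 * s₀) • Tvec a u x) * v x‖ ≤
      3 * cC * (Su * Sv) := by
    have hpt : ∀ x ∈ Ω, ‖star (Vop a u x - (2 * s₀) • Tvec a u x) * v x‖ ≤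
        ∑ j : Fin 3, cC * (‖pdQ j u x‖ * ‖v x‖) := by
      intro x hx
      rw [norm_mul, Quaternion.norm_star]
      have hT : ‖Tvec a u x‖ ≤ KB * ∑ j : Fin 3, ‖pdQ j u x‖ := by
        refine (norm_sum_le _ _).trans ?_
        have he : ∀ ℓ : Fin 3, ‖eQ ℓ * (a ℓ x • pdQ ℓ u x)‖ = |a ℓ x| * ‖pdQ ℓ u x‖ :=
          fun ℓ => by rw [norm_mul, normEQ, one_mul, norm_smul, Real.norm_eq_abs]
        simp only [he]
        have h0 : |a 0 x| * ‖pdQ 0 u x‖ ≤ KB * ‖pdQ 0 u x‖ :=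
          mul_le_mul_of_nonneg_right ((hBb 0 x hx).trans (hBleKB 0)) (norm_nonneg _)
        have h1 : |a 1 x| * ‖pdQ 1 u x‖ ≤ KB * ‖pdQ 1 u x‖ :=
          mul_le_mul_of_nonneg_right ((hBb 1 x hx).trans (hBleKB 1)) (norm_nonneg _)
        have h2 : |a 2 x| * ‖pdQ 2 u x‖ ≤ KB * ‖pdQ 2 u x‖ :=
          mul_le_mul_of_nonneg_right ((hBb 2 x hx).trans (hBleKB 2)) (norm_nonneg _)
        rw [Fin.sum_univ_three, Fin.sum_univ_three]
        have hr : KB * ‖pdQ 0 u x‖ + KB * ‖pdQ 1 u x‖ + KB * ‖pdQ 2 u x‖ =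
            KB * (‖pdQ 0 u x‖ + ‖pdQ 1 u x‖ + ‖pdQ 2 u x‖) := by ring
        linarith
      have hV : ‖Vop a u x‖ ≤ 2 * KM * ∑ j : Fin 3, ‖pdQ j u x‖ := by
        have he : ∀ (i j k : Fin 3) (r r' : ℝ),
            ‖eQ i * (r • pdQ j u x - r' • pdQ k u x)‖ ≤
              |r| * ‖pdQ j u x‖ + |r'| * ‖pdQ k u x‖ := by
          intro i j k r r'
          rw [norm_mul, normEQ, one_mul]
          refine (norm_sub_le _ _).trans (le_of_eq ?_)
          rw [norm_smul, norm_smul, Real.norm_eq_abs, Real.norm_eq_abs]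
        refine (norm_add₃_le).trans ?_
        have e0 := he 0 1 2 (a 2 x * pdR 2 (a 1) x) (a 1 x * pdR 1 (a 2) x)
        have e1 := he 1 0 2 (a 2 x * pdR 2 (a 0) x) (a 0 x * pdR 0 (a 2) x)
        have e2 := he 2 1 0 (a 0 x * pdR 0 (a 1) x) (a 1 x * pdR 1 (a 0) x)
        have m21 : |a 2 x * pdR 2 (a 1) x| ≤ KM := (hMb 2 1 x hx).trans (hMleKM 2 1)
        have m12 : |a 1 x * pdR 1 (a 2) x| ≤ KM := (hMb 1 2 x hx).trans (hMleKM 1 2)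
        have m20 : |a 2 x * pdR 2 (a 0) x| ≤ KM := (hMb 2 0 x hx).trans (hMleKM 2 0)
        have m02 : |a 0 x * pdR 0 (a 2) x| ≤ KM := (hMb 0 2 x hx).trans (hMleKM 0 2)
        have m01 : |a 0 x * pdR 0 (a 1) x| ≤ KM := (hMb 0 1 x hx).trans (hMleKM 0 1)
        have m10 : |a 1 x * pdR 1 (a 0) x| ≤ KM := (hMb 1 0 x hx).trans (hMleKM 1 0)
        rw [Fin.sum_univ_three]
        have p21 : |a 2 x * pdR 2 (a 1) x| * ‖pdQ 1 u x‖ ≤ KM * ‖pdQ 1 u x‖ :=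
          mul_le_mul_of_nonneg_right m21 (norm_nonneg _)
        have p12 : |a 1 x * pdR 1 (a 2) x| * ‖pdQ 2 u x‖ ≤ KM * ‖pdQ 2 u x‖ :=
          mul_le_mul_of_nonneg_right m12 (norm_nonneg _)
        have p20 : |a 2 x * pdR 2 (a 0) x| * ‖pdQ 0 u x‖ ≤ KM * ‖pdQ 0 u x‖ :=
          mul_le_mul_of_nonneg_right m20 (norm_nonneg _)
        have p02 : |a 0 x * pdR 0 (a 2) x| * ‖pdQ 2 u x‖ ≤ KM * ‖pdQ 2 u x‖ :=
          mul_le_mul_of_nonneg_right m02 (norm_nonneg _)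
        have p01 : |a 0 x * pdR 0 (a 1) x| * ‖pdQ 1 u x‖ ≤ KM * ‖pdQ 1 u x‖ :=
          mul_le_mul_of_nonneg_right m01 (norm_nonneg _)
        have p10 : |a 1 x * pdR 1 (a 0) x| * ‖pdQ 0 u x‖ ≤ KM * ‖pdQ 0 u x‖ :=
          mul_le_mul_of_nonneg_right m10 (norm_nonneg _)
        have hr : KM * ‖pdQ 1 u x‖ + KM * ‖pdQ 2 u x‖ + KM * ‖pdQ 0 u x‖
            + KM * ‖pdQ 2 u x‖ + KM * ‖pdQ 1 u x‖ + KM * ‖pdQ 0 u x‖ =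
            2 * KM * (‖pdQ 0 u x‖ + ‖pdQ 1 u x‖ + ‖pdQ 2 u x‖) := by ring
        linarith
      have hVT : ‖Vop a u x - (2 * s₀) • Tvec a u x‖ ≤ cC * ∑ j : Fin 3, ‖pdQ j u x‖ := by
        refine (norm_sub_le _ _).trans ?_
        rw [norm_smul, Real.norm_eq_abs]
        have hs : |2 * s₀| = 2 * |s₀| := by rw [abs_mul]; norm_num
        rw [hs]
        have hsum0 : 0 ≤ ∑ j : Fin 3, ‖pdQ j u x‖ :=
          Finset.sum_nonneg fun j _ => norm_nonneg _
        have h2T : 2 * |s₀| * ‖Tvec a u x‖ ≤ 2 * |s₀| * (KB * ∑ j : Fin 3, ‖pdQ j u x‖) :=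
          mul_le_mul_of_nonneg_left hT (by positivity)
        have hr : 2 * KM * (∑ j : Fin 3, ‖pdQ j u x‖)
            + 2 * |s₀| * (KB * ∑ j : Fin 3, ‖pdQ j u x‖) =
            (2 * KM + 2 * |s₀| * KB) * ∑ j : Fin 3, ‖pdQ j u x‖ := by ring
        rw [hcCdef]
        linarith
      calc ‖Vop a u x - (2 * s₀) • Tvec a u x‖ * ‖v x‖ ≤
          (cC * ∑ j : Fin 3, ‖pdQ j u x‖) * ‖v x‖ :=
            mul_le_mul_of_nonneg_right hVT (norm_nonneg _)
        _ = ∑ j : Fin 3, cC * (‖pdQ j u x‖ * ‖v x‖) := by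
            rw [Fin.sum_univ_three, Fin.sum_univ_three]; ring
    calc ‖∫ x in Ω, star (Vop a u x - (2 * s₀) • Tvec a u x) * v x‖ ≤
        ∫ x in Ω, ‖star (Vop a u x - (2 * s₀) • Tvec a u x) * v x‖ :=
          norm_integral_le_integral_norm _
      _ ≤ ∫ x in Ω, ∑ j : Fin 3, cC * (‖pdQ j u x‖ * ‖v x‖) := by
          refine integral_mono_of_nonneg (Filter.Eventually.of_forall fun x => norm_nonneg _)
            (integrable_finset_sum _ fun j _ =>
              (integrable_norm_mul (huD j) hvL2).const_mul cC) ?_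
          filter_upwards [ae_restrict_mem hΩo.measurableSet] with x hx using hpt x hx
      _ = ∑ j : Fin 3, ∫ x in Ω, cC * (‖pdQ j u x‖ * ‖v x‖) :=
          integral_finset_sum _ fun j _ =>
            (integrable_norm_mul (huD j) hvL2).const_mul cC
      _ = ∑ j : Fin 3, cC * ∫ x in Ω, ‖pdQ j u x‖ * ‖v x‖ :=
          Finset.sum_congr rfl fun j _ => integral_const_mul cC _
      _ ≤ ∑ j : Fin 3, cC * (Su * Sv) := by
          refine Finset.sum_le_sum fun j _ => mul_le_mul_of_nonneg_left ?_ hcC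
          refine (myCS (huD j) hvL2).trans ?_
          exact mul_le_mul (hDu j) hUv
            (Real.rpow_nonneg (integral_nonneg fun x => by positivity) _) hSu0
      _ = 3 * cC * (Su * Sv) := by rw [Fin.sum_univ_three]; ring
  -- Term D
  have hDterm : ‖σ • ∫ x in Ω, star (u x) * v x‖ ≤ σ * (Su * Sv) := by
    rw [norm_smul, Real.norm_eq_abs, abs_of_nonneg hσ]
    have h := key 1 zero_le_one u v (fun x => star (u x) * v x) huL2 hvL2 hUu hUv
      (fun x hx => le_of_eq (by rw [norm_mul, Quaternion.norm_star, one_mul]))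
    rw [one_mul] at h
    exact mul_le_mul_of_nonneg_left h hσ
  -- combine
  have n4 : ∀ q1 q2 q3 q4 : Quaternion ℝ, ‖q1 + q2 + q3 + q4‖ ≤ ‖q1‖ + ‖q2‖ + ‖q3‖ + ‖q4‖ := by
    intro q1 q2 q3 q4
    have a1 : ‖q1 + q2‖ ≤ ‖q1‖ + ‖q2‖ := norm_add_le _ _
    have a2 : ‖q1 + q2 + q3‖ ≤ ‖q1 + q2‖ + ‖q3‖ := norm_add_le _ _
    have a3 : ‖q1 + q2 + q3 + q4‖ ≤ ‖q1 + q2 + q3‖ + ‖q4‖ := norm_add_le _ _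
    linarith
  refine ((n4 _ _ _ _).trans
    (add_le_add (add_le_add (add_le_add hA hB2) hCterm) hDterm)).trans (le_of_eq (by ring))
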